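/- Let the group G = ℤ/2 act continuously on the circle S¹ = {z ∈ ℂ : |z| = 1} with the nontrivial element acting by complex conjugation z ↦ z̄. Then, for r = 2 with t_1 = 0 and t_2 = 1, the weak equivariant topological complexity satisfies TC^w_{2,G}(S¹) = 1. -/

import Mathlib

open scoped unitInterval

/-- The relative sectional category `secat_f[p : E → B]` for `f : B → C`. -/
noncomputable def secatf {E B C : Type*} [TopologicalSpace E] [TopologicalSpace B]
    [TopologicalSpace C] (p : C(E, B)) (f : C(B, C)) : ℕ∞ :=
  sInf {n : ℕ∞ | ∃ m : ℕ, n = m ∧ ∃ U : Fin (m + 1) → Set C,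
    (∀ i, IsOpen (U i)) ∧ Set.range f ⊆ (⋃ i, U i) ∧
    ∀ i, ∃ s : C((⇑f ⁻¹' U i : Set B), E), ∀ x, p (s x) = (x : B)}

/-- The evaluation map `ρ_r : C([0,1], X) → X^r`, `γ ↦ (γ (t 0), …, γ (t (r-1)))`. -/
noncomputable def pathEval (X : Type*) [TopologicalSpace X] {r : ℕ}
    (t : Fin r → unitInterval) : C(C(unitInterval, X), Fin r → X) :=
  ⟨fun γ i => γ (t i), continuous_pi fun i => ContinuousEvalConst.continuous_eval_const (t i)⟩

/-- The orbit quotient map `X → X/G` as a continuous map. -/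
noncomputable def orbitQuotMap (G X : Type*) [Group G] [MulAction G X]
    [TopologicalSpace X] : C(X, Quotient (MulAction.orbitRel G X)) :=
  ⟨Quotient.mk _, continuous_quotient_mk'⟩

/-- Complex conjugation `z ↦ z̄` on the unit circle `S¹ ⊆ ℂ`. -/
noncomputable def circleConj (z : Circle) : Circle :=
  ⟨(starRingEnd ℂ) (z : ℂ), by
    have := Circle.norm_coe z
    simp only [Submonoid.unitSphere] at *
    simp [mem_sphere_zero_iff_norm, this]⟩

@[simp] lemma circleConj_circleConj (z : Circle) : circleConj (circleConj z) = z :=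
  Circle.ext (by simp [circleConj])

/-- The action of `G = ℤ/2` on the circle in which the nontrivial element acts by complex
conjugation `z ↦ z̄`. -/
noncomputable instance : SMul (Multiplicative (ZMod 2)) Circle :=
  ⟨fun g z => if g = 1 then z else circleConj z⟩

lemma zmod2_smul_circle_def (g : Multiplicative (ZMod 2)) (z : Circle) :
    g • z = if g = 1 then z else circleConj z := rfl

noncomputable instance : MulAction (Multiplicative (ZMod 2)) Circle where
  one_smul z := if_pos rfl
  mul_smul g h z := by
    have hcases : ∀ a : Multiplicative (ZMod 2),
        a = 1 ∨ a = Multiplicative.ofAdd 1 := by decide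
    have hne : (Multiplicative.ofAdd (1 : ZMod 2)) ≠ 1 := by decide
    have hsq : (Multiplicative.ofAdd (1 : ZMod 2)) * Multiplicative.ofAdd (1 : ZMod 2) = 1 := by
      decide
    rcases hcases g with hg | hg <;> rcases hcases h with hh | hh <;> subst hg <;> subst hh <;>
      simp [zmod2_smul_circle_def, hne, hsq]
open Complex

lemma slitPlane_of_abs_one {z : ℂ} (habs : ‖z‖ = 1) (h : z ≠ -1) :
    z ∈ Complex.slitPlane := by
  rw [Complex.mem_slitPlane_iff_arg]
  refine ⟨fun harg => h ?_, by intro h0; rw [h0] at habs; simp at habs⟩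
  have hz := Complex.norm_mul_exp_arg_mul_I z
  rw [harg, habs, Complex.exp_pi_mul_I] at hz
  rw [← hz]; push_cast; ring

lemma no_cont_log : ¬ ∃ ψ : Circle → ℝ, Continuous ψ ∧ ∀ x, Circle.exp (ψ x) = x := by
  rintro ⟨ψ, hψ, hexp⟩
  set h : ℝ → ℝ := fun θ => ψ (Circle.exp θ) - θ with hh
  have hcont : Continuous h := (hψ.comp Circle.exp.continuous).sub continuous_id
  have hint : ∀ θ, ∃ n : ℤ, h θ = n * (2 * Real.pi) := by
    intro θ
    have : Circle.exp (h θ) = 1 := by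
      rw [hh]
      simp only
      rw [sub_eq_add_neg, Circle.exp_add, hexp, Circle.exp_neg, mul_inv_cancel]
    exact Circle.exp_eq_one.mp this
  obtain ⟨m, hm⟩ := hint 0
  have h2π : h (2*Real.pi) = h 0 - 2*Real.pi := by
    simp [hh, Circle.exp_two_pi, Circle.exp_zero]
  obtain ⟨θ0, hθ0mem, hθ0⟩ : ∃ θ0 ∈ Set.Icc (0:ℝ) (2*Real.pi), h θ0 = h 0 - Real.pi := by
    have hsub := intermediate_value_Icc' (by positivity : (0:ℝ) ≤ 2*Real.pi) hcont.continuousOn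
    have hmem : h 0 - Real.pi ∈ Set.Icc (h (2*Real.pi)) (h 0) := by
      rw [h2π]; constructor <;> nlinarith [Real.pi_pos]
    obtain ⟨θ0, hA, hB⟩ := hsub hmem
    exact ⟨θ0, hA, hB⟩
  obtain ⟨n, hn⟩ := hint θ0
  have key : ((2*n - 2*m + 1 : ℤ) : ℝ) * Real.pi = 0 := by
    rw [hθ0, hm] at hn
    push_cast
    linarith
  have := mul_eq_zero.mp key
  rcases this with hc | hc
  · have : (2*n - 2*m + 1 : ℤ) = 0 := by exact_mod_cast hc
    omega
  · exact Real.pi_ne_zero hc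

lemma Circle.exp_sum (s : Finset ℕ) (f : ℕ → ℝ) :
    Circle.exp (∑ j ∈ s, f j) = ∏ j ∈ s, Circle.exp (f j) := by
  classical
  induction s using Finset.induction with
  | empty => simp [Circle.exp_zero]
  | insert _ _ h ih => rw [Finset.sum_insert h, Finset.prod_insert h, Circle.exp_add, ih]

lemma no_global_section (c : Circle → C(unitInterval, Circle)) (hc : Continuous c)
    (h0 : ∀ x, c x 0 = x) (h1 : ∀ x, c x 1 = 1) : False := by
  have hF : Continuous (fun p : Circle × unitInterval => ((c p.1 p.2 : Circle) : ℂ)) := by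
    apply continuous_subtype_val.comp
    exact ContinuousEval.continuous_eval.comp (hc.prodMap continuous_id)
  obtain ⟨δ, hδpos, hδ⟩ := Metric.uniformContinuous_iff.mp
      (CompactSpace.uniformContinuous_of_continuous hF) 2 (by norm_num)
  obtain ⟨N', hN'⟩ := exists_nat_one_div_lt hδpos
  set N : ℕ := N' + 1 with hN
  have hNpos : (0:ℝ) < N := by positivity
  set pt : ℕ → unitInterval := fun j =>
    ⟨min (j / N) 1, ⟨le_min (by positivity) zero_le_one, min_le_right _ _⟩⟩ with hptdef
  have hpt0 : pt 0 = 0 := by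
    apply Subtype.ext; simp [hptdef]
  have hptN : pt N = 1 := by
    apply Subtype.ext
    simp [hptdef, div_self (ne_of_gt hNpos)]
  set g : Circle → ℕ → Circle := fun x j => c x (pt j) with hgdef
  have hgcont : ∀ j, Continuous fun x => g x j := fun j =>
    (continuous_eval_const (pt j)).comp hc
  have minlip : ∀ a b : ℝ, dist (min a 1) (min b 1) ≤ dist a b := by
    intro a b
    have := lipschitzWith_min.dist_le_mul (a, (1:ℝ)) (b, 1)
    simpa [Prod.dist_eq, dist_self, max_eq_left dist_nonneg] using this
  have hratio : ∀ (x : Circle) (j : ℕ), ((g x (j+1) / g x j : Circle) : ℂ) ≠ -1 := by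
    intro x j h
    have heq : (g x (j+1) : ℂ) = -(g x j : ℂ) := by
      rw [Circle.coe_div] at h
      field_simp at h
      linear_combination h
    have hdist : dist ((x, pt (j+1)) : Circle × unitInterval) (x, pt j) < δ := by
      rw [Prod.dist_eq]
      have h1' : dist (pt (j+1)) (pt j) ≤ 1/N := by
        rw [Subtype.dist_eq]
        refine le_trans (minlip _ _) ?_
        rw [Real.dist_eq]
        have : ((j:ℝ)+1) / N - j / N = 1/N := by field_simp; ring
        rw [show ((j+1 : ℕ) : ℝ) = (j:ℝ)+1 by push_cast; ring, this]
        rw [abs_of_pos (by positivity)]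
      have h2' : (1:ℝ)/N < δ := by
        rw [hN]; push_cast; exact hN'
      simp only [dist_self]
      calc max (0:ℝ) (dist (pt (j+1)) (pt j)) = dist (pt (j+1)) (pt j) :=
            max_eq_right dist_nonneg
        _ ≤ 1/N := h1'
        _ < δ := h2'
    have hgeq : ∀ (y : Circle) (k : ℕ), g y k = (c y) (pt k) := fun _ _ => rfl
    have hlt := hδ hdist
    rw [← hgeq x (j+1), ← hgeq x j, heq, dist_eq_norm] at hlt
    have h2 : ‖-(g x j : ℂ) - (g x j : ℂ)‖ = 2 := by
      have he : -(g x j : ℂ) - (g x j : ℂ) = -(2 * (g x j : ℂ)) := by ring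
      rw [he, norm_neg, norm_mul]
      simp [Circle.norm_coe]
    rw [h2] at hlt
    exact lt_irrefl _ hlt
  set φ : Circle → ℝ :=
    fun x => ∑ j ∈ Finset.range N, Complex.arg ((g x (j+1) / g x j : Circle) : ℂ) with hφdef
  have hφexp : ∀ x, Circle.exp (φ x) = x⁻¹ := by
    intro x
    rw [hφdef]
    simp only
    rw [Circle.exp_sum]
    have : ∀ j ∈ Finset.range N, Circle.exp (Complex.arg ((g x (j+1) / g x j : Circle) : ℂ))
        = g x (j+1) / g x j := fun j _ => Circle.exp_arg _
    rw [Finset.prod_congr rfl this, Finset.prod_range_div]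
    rw [hgdef]
    simp only
    rw [hpt0, hptN, h0, h1, one_div]
  have hφcont : Continuous φ := by
    apply continuous_finset_sum
    intro j _
    rw [continuous_iff_continuousAt]
    intro x
    have hr : Continuous fun y : Circle => ((g y (j+1) / g y j : Circle) : ℂ) :=
      continuous_subtype_val.comp ((hgcont (j+1)).div' (hgcont j))
    show ContinuousAt (Complex.arg ∘ fun y : Circle => ((g y (j+1) / g y j : Circle) : ℂ)) x
    exact ContinuousAt.comp (Complex.continuousAt_arg (slitPlane_of_abs_one (Circle.norm_coe _) (hratio x j))) hr.continuousAt
  apply no_cont_log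
  refine ⟨fun x => -φ x, hφcont.neg, fun x => ?_⟩
  rw [Circle.exp_neg, hφexp, inv_inv]


lemma section_of_angle {A : Set (Fin 2 → Circle)} {θ : A → ℝ} (hθ : Continuous θ)
    (hend : ∀ v : A, Circle.exp (θ v) = (v : Fin 2 → Circle) 1 / (v : Fin 2 → Circle) 0) :
    ∃ s : C(A, C(unitInterval, Circle)),
      ∀ v, (pathEval Circle ![0,1]) (s v) = (v : Fin 2 → Circle) := by
  refine ⟨ContinuousMap.curry ⟨fun p => (p.1 : Fin 2 → Circle) 0 *
      Circle.exp ((p.2 : ℝ) * θ p.1), ?_⟩, ?_⟩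
  · apply Continuous.mul
    · exact (continuous_apply 0).comp (continuous_subtype_val.comp continuous_fst)
    · exact Circle.exp.continuous.comp
        ((continuous_subtype_val.comp continuous_snd).mul (hθ.comp continuous_fst))
  · intro v
    funext i
    show (v : Fin 2 → Circle) 0 * Circle.exp (((![0,1] i : unitInterval) : ℝ) * θ v) = _
    fin_cases i
    · simp [Circle.exp_zero]
    · simp only [Fin.mk_one, Matrix.cons_val_one, Matrix.cons_val_zero, Matrix.head_cons, Set.Icc.coe_one, one_mul, hend v]
      rw [mul_div_assoc', mul_div_cancel_left]

noncomputable def Vne : Set (Fin 2 → Circle) := {v | (v 1 : ℂ) ≠ -(v 0 : ℂ)}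
noncomputable def Vne' : Set (Fin 2 → Circle) := {v | (v 1 : ℂ) ≠ (v 0 : ℂ)}

lemma exists_section_Vne : ∃ s : C(Vne, C(unitInterval, Circle)),
    ∀ v, (pathEval Circle ![0,1]) (s v) = (v : Fin 2 → Circle) := by
  have hne : ∀ v : Vne,
      (((v : Fin 2 → Circle) 1 / (v : Fin 2 → Circle) 0 : Circle) : ℂ) ≠ -1 := by
    intro v h
    rw [Circle.coe_div, div_eq_iff (Circle.coe_ne_zero _)] at h
    exact v.2 (by rw [h]; ring)
  apply section_of_angle
    (θ := fun v : Vne =>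
      Complex.arg (((v : Fin 2 → Circle) 1 / (v : Fin 2 → Circle) 0 : Circle) : ℂ))
  · rw [continuous_iff_continuousAt]
    intro v
    have hr : Continuous fun v : Vne =>
        (((v : Fin 2 → Circle) 1 / (v : Fin 2 → Circle) 0 : Circle) : ℂ) :=
      continuous_subtype_val.comp (((continuous_apply 1).comp continuous_subtype_val).div'
        ((continuous_apply 0).comp continuous_subtype_val))
    show ContinuousAt (Complex.arg ∘ fun v : Vne =>
      (((v : Fin 2 → Circle) 1 / (v : Fin 2 → Circle) 0 : Circle) : ℂ)) v
    exact ContinuousAt.comp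
      (Complex.continuousAt_arg (slitPlane_of_abs_one (Circle.norm_coe _) (hne v)))
      hr.continuousAt
  · intro v; exact Circle.exp_arg _

lemma exp_pi_add_arg_neg (w : Circle) :
    Circle.exp (Real.pi + Complex.arg (-(w : ℂ))) = w := by
  apply Subtype.ext
  rw [Circle.coe_exp]
  push_cast
  rw [add_mul, Complex.exp_add, Complex.exp_pi_mul_I]
  have habs : ‖(-(w : ℂ))‖ = 1 := by
    rw [norm_neg, Circle.norm_coe]
  have h := Complex.norm_mul_exp_arg_mul_I (-(w : ℂ))
  rw [habs] at h
  push_cast at h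
  rw [one_mul] at h
  rw [h]; ring

lemma exists_section_Vne' : ∃ s : C(Vne', C(unitInterval, Circle)),
    ∀ v, (pathEval Circle ![0,1]) (s v) = (v : Fin 2 → Circle) := by
  have hne : ∀ v : Vne',
      -((((v : Fin 2 → Circle) 1 / (v : Fin 2 → Circle) 0 : Circle)) : ℂ) ≠ -1 := by
    intro v h
    rw [neg_inj] at h
    rw [Circle.coe_div, div_eq_one_iff_eq (Circle.coe_ne_zero _)] at h
    exact v.2 h
  apply section_of_angle
    (θ := fun v : Vne' => Real.pi +
      Complex.arg (-(((v : Fin 2 → Circle) 1 / (v : Fin 2 → Circle) 0 : Circle) : ℂ)))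
  · rw [continuous_iff_continuousAt]
    intro v
    have hr : Continuous fun v : Vne' =>
        (-(((v : Fin 2 → Circle) 1 / (v : Fin 2 → Circle) 0 : Circle) : ℂ)) :=
      (continuous_subtype_val.comp (((continuous_apply 1).comp continuous_subtype_val).div'
        ((continuous_apply 0).comp continuous_subtype_val))).neg
    apply ContinuousAt.add continuousAt_const
    show ContinuousAt (Complex.arg ∘ fun v : Vne' =>
      (-(((v : Fin 2 → Circle) 1 / (v : Fin 2 → Circle) 0 : Circle) : ℂ))) v
    have habs : ‖(-(((v : Fin 2 → Circle) 1 / (v : Fin 2 → Circle) 0 : Circle) : ℂ))‖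
        = 1 := by rw [norm_neg, Circle.norm_coe]
    exact ContinuousAt.comp
      (Complex.continuousAt_arg (slitPlane_of_abs_one habs (hne v))) hr.continuousAt
  · intro v; exact exp_pi_add_arg_neg _

@[simp] lemma coe_circleConj (z : Circle) : (circleConj z : ℂ) = (starRingEnd ℂ) (z : ℂ) := rfl

lemma isOpen_Vne : IsOpen Vne := by
  have h : Vne = (fun v : Fin 2 → Circle => ((v 1 : ℂ) + (v 0 : ℂ))) ⁻¹' {0}ᶜ := by
    ext v
    simp only [Vne, Set.mem_setOf_eq, Set.mem_preimage, Set.mem_compl_iff,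
      Set.mem_singleton_iff]
    constructor
    · intro hv h0; exact hv (by linear_combination h0)
    · intro h0 hv; exact h0 (by rw [hv]; ring)
  rw [h]
  exact isOpen_compl_singleton.preimage
    ((continuous_subtype_val.comp (continuous_apply 1)).add
      (continuous_subtype_val.comp (continuous_apply 0)))

lemma isOpen_Vne' : IsOpen Vne' := by
  have h : Vne' = (fun v : Fin 2 → Circle => ((v 1 : ℂ) - (v 0 : ℂ))) ⁻¹' {0}ᶜ := by
    ext v
    simp only [Vne', Set.mem_setOf_eq, Set.mem_preimage, Set.mem_compl_iff,
      Set.mem_singleton_iff, sub_eq_zero]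
  rw [h]
  exact isOpen_compl_singleton.preimage
    ((continuous_subtype_val.comp (continuous_apply 1)).sub
      (continuous_subtype_val.comp (continuous_apply 0)))

lemma conj_mem_Vne : ∀ v ∈ Vne, (fun i => circleConj (v i)) ∈ Vne := by
  intro v hv
  simp only [Vne, Set.mem_setOf_eq, coe_circleConj] at hv ⊢
  intro h
  apply hv
  have h2 := congrArg (starRingEnd ℂ) h
  simpa using h2

lemma conj_mem_Vne' : ∀ v ∈ Vne', (fun i => circleConj (v i)) ∈ Vne' := by
  intro v hv
  simp only [Vne', Set.mem_setOf_eq, coe_circleConj] at hv ⊢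
  intro h
  apply hv
  have h2 := congrArg (starRingEnd ℂ) h
  simpa using h2

lemma mem_Vne_or_Vne' (v : Fin 2 → Circle) : v ∈ Vne ∨ v ∈ Vne' := by
  by_contra h
  push_neg at h
  obtain ⟨h1, h2⟩ := h
  simp only [Vne, Vne', Set.mem_setOf_eq, not_not] at h1 h2
  have h3 : (2 : ℂ) * (v 0 : ℂ) = 0 := by linear_combination h1 - h2
  rcases mul_eq_zero.mp h3 with h4 | h4
  · norm_num at h4
  · exact Circle.coe_ne_zero _ h4

/-- For the action of `G = ℤ/2` on the circle `S¹ ⊆ ℂ` in which the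
nontrivial element acts by complex conjugation, the weak equivariant topological complexity
(for `r = 2`, `t₁ = 0`, `t₂ = 1`) satisfies `TC^w_{2,G}(S¹) = 1`. -/
theorem weak_eqTC_circle_conj :
    secatf (pathEval Circle ![0, 1])
      (orbitQuotMap (Multiplicative (ZMod 2)) (Fin 2 → Circle)) = 1 := by
  have hq : ⇑(orbitQuotMap (Multiplicative (ZMod 2)) (Fin 2 → Circle)) =
      Quotient.mk (MulAction.orbitRel (Multiplicative (ZMod 2)) (Fin 2 → Circle)) := rfl
  have hσ : ∀ w : Fin 2 → Circle,
      (Multiplicative.ofAdd (1 : ZMod 2)) • w = fun i => circleConj (w i) := by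
    intro w; funext i
    rw [Pi.smul_apply, zmod2_smul_circle_def, if_neg (by decide)]
  have hgcases : ∀ a : Multiplicative (ZMod 2), a = 1 ∨ a = Multiplicative.ofAdd 1 := by decide
  have hpre : ∀ V : Set (Fin 2 → Circle), (∀ v ∈ V, (fun i => circleConj (v i)) ∈ V) →
      ⇑(orbitQuotMap (Multiplicative (ZMod 2)) (Fin 2 → Circle)) ⁻¹'
      (⇑(orbitQuotMap (Multiplicative (ZMod 2)) (Fin 2 → Circle)) '' V) = V := by
    intro V hV
    ext w
    simp only [hq, Set.mem_preimage, Set.mem_image]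
    constructor
    · rintro ⟨v, hv, hvw⟩
      have hrel : v ∈ MulAction.orbit (Multiplicative (ZMod 2)) w := by
        rw [← MulAction.orbitRel_apply]
        exact Quotient.exact hvw
      obtain ⟨g, hg0⟩ := hrel
      have hg : g • w = v := hg0
      rcases hgcases g with h1 | h1
      · rw [h1, one_smul] at hg
        rwa [hg]
      · rw [h1, hσ w] at hg
        rw [← hg] at hv
        have := hV _ hv
        simpa only [circleConj_circleConj] using this
    · intro hw; exact ⟨w, hw, rfl⟩
  have hopenU : ∀ V : Set (Fin 2 → Circle), IsOpen V →
      (∀ v ∈ V, (fun i => circleConj (v i)) ∈ V) →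
      IsOpen (⇑(orbitQuotMap (Multiplicative (ZMod 2)) (Fin 2 → Circle)) '' V) := by
    intro V hVopen hVinv
    rw [← (isQuotientMap_quotient_mk' (s := MulAction.orbitRel (Multiplicative (ZMod 2))
      (Fin 2 → Circle))).isOpen_preimage (s :=
      ⇑(orbitQuotMap (Multiplicative (ZMod 2)) (Fin 2 → Circle)) '' V)]
    show IsOpen (⇑(orbitQuotMap (Multiplicative (ZMod 2)) (Fin 2 → Circle)) ⁻¹'
      (⇑(orbitQuotMap (Multiplicative (ZMod 2)) (Fin 2 → Circle)) '' V))
    rw [hpre V hVinv]; exact hVopen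
  apply le_antisymm
  · apply sInf_le
    refine ⟨1, by norm_num, ![⇑(orbitQuotMap (Multiplicative (ZMod 2)) (Fin 2 → Circle)) '' Vne,
      ⇑(orbitQuotMap (Multiplicative (ZMod 2)) (Fin 2 → Circle)) '' Vne'], ?_, ?_, ?_⟩
    · intro i
      fin_cases i
      · simpa only [Fin.zero_eta, Matrix.cons_val_zero] using hopenU Vne isOpen_Vne conj_mem_Vne
      · simpa only [Fin.mk_one, Matrix.cons_val_one, Matrix.cons_val_zero, Matrix.head_cons]
          using hopenU Vne' isOpen_Vne' conj_mem_Vne'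
    · rintro x ⟨v, rfl⟩
      rcases mem_Vne_or_Vne' v with hv | hv
      · exact Set.mem_iUnion.mpr ⟨0, by
          simpa only [Fin.zero_eta, Matrix.cons_val_zero] using Set.mem_image_of_mem _ hv⟩
      · exact Set.mem_iUnion.mpr ⟨1, by
          simpa only [Fin.mk_one, Matrix.cons_val_one, Matrix.cons_val_zero, Matrix.head_cons] using Set.mem_image_of_mem _ hv⟩
    · intro i
      fin_cases i
      · have heq : ⇑(orbitQuotMap (Multiplicative (ZMod 2)) (Fin 2 → Circle)) ⁻¹'
            (![⇑(orbitQuotMap (Multiplicative (ZMod 2)) (Fin 2 → Circle)) '' Vne,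
              ⇑(orbitQuotMap (Multiplicative (ZMod 2)) (Fin 2 → Circle)) '' Vne']
              (⟨0, by norm_num⟩ : Fin 2)) = Vne := by
          simpa only [Fin.zero_eta, Matrix.cons_val_zero] using hpre Vne conj_mem_Vne
        rw [heq]
        exact exists_section_Vne
      · have heq : ⇑(orbitQuotMap (Multiplicative (ZMod 2)) (Fin 2 → Circle)) ⁻¹'
            (![⇑(orbitQuotMap (Multiplicative (ZMod 2)) (Fin 2 → Circle)) '' Vne,
              ⇑(orbitQuotMap (Multiplicative (ZMod 2)) (Fin 2 → Circle)) '' Vne']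
              (⟨1, by norm_num⟩ : Fin 2)) = Vne' := by
          simpa only [Fin.mk_one, Matrix.cons_val_one, Matrix.cons_val_zero, Matrix.head_cons] using hpre Vne' conj_mem_Vne'
        rw [heq]
        exact exists_section_Vne'
  · refine le_sInf ?_
    rintro n ⟨m, rfl, U, hopen, hcover, hsec⟩
    by_contra hlt
    push_neg at hlt
    have hm0 : m = 0 := by exact_mod_cast Nat.lt_one_iff.mp (by exact_mod_cast hlt)
    subst hm0
    obtain ⟨s₀, hs₀⟩ := hsec 0
    have hmem : ∀ v : Fin 2 → Circle,
        v ∈ ⇑(orbitQuotMap (Multiplicative (ZMod 2)) (Fin 2 → Circle)) ⁻¹' U 0 := by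
      intro v
      have h1 : (orbitQuotMap (Multiplicative (ZMod 2)) (Fin 2 → Circle)) v ∈ ⋃ i, U i :=
        hcover ⟨v, rfl⟩
      obtain ⟨i, hi⟩ := Set.mem_iUnion.mp h1
      have hi0 : i = 0 := Fin.ext (by omega)
      rwa [hi0] at hi
    set c : Circle → C(unitInterval, Circle) := fun x => s₀ ⟨![x, 1], hmem _⟩ with hcdef
    have hc : Continuous c := by
      apply s₀.continuous.comp
      apply Continuous.subtype_mk
      apply continuous_pi
      intro i; fin_cases i
      · simpa only [Fin.zero_eta, Matrix.cons_val_zero] using continuous_id'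
      · simpa only [Fin.mk_one, Matrix.cons_val_one, Matrix.cons_val_zero, Matrix.head_cons] using continuous_const
    apply no_global_section c hc
    · intro x
      have h2 := congrFun (hs₀ ⟨![x, 1], hmem _⟩) 0
      simpa [pathEval, hcdef] using h2
    · intro x
      have h2 := congrFun (hs₀ ⟨![x, 1], hmem _⟩) 1
      simpa [pathEval, hcdef] using h2
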